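/- Let n ≥ 1 be odd, let k_1, …, k_n be pairwise distinct strictly positive real numbers, let f(u) := (−1)^{n+1} · u · ∏_{i=1}^n (1 − u/k_i), and let y_0 < 0. If T > 0 and y : [0, T) → ℝ is differentiable with y(0) = y_0 and y′(t) = f(y(t)) for all t ∈ [0, T), then T ≤ ∑_{i=1}^n [(∏_{j≠i} k_j) / (∏_{j≠i} (k_j − k_i))] · ln(1 + k_i/(−y_0)); i.e., the solution blows up (to −∞) no later than this exact finite time, which in particular is smaller than (∏_{i=1}^n k_i)/(n·(−y_0)^n). -/

import Mathlib

open Finset Filter Topology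

lemma partial_fractions {ι : Type*} [DecidableEq ι] (c : ι → ℝ) (s : Finset ι)
    (hc : Set.InjOn c s) (hne : s.Nonempty) :
    ∀ u : ℝ, (∀ i ∈ s, c i ≠ u) →
      (∏ j ∈ s, (c j - u))⁻¹ =
        ∑ i ∈ s, (∏ j ∈ s.erase i, (c j - c i))⁻¹ * (c i - u)⁻¹ := by
  induction s using Finset.cons_induction with
  | empty => exact absurd hne (by simp)
  | cons a s ha ih =>
    intro u hu
    by_cases hs : s.Nonempty
    · have hcs : Set.InjOn c s := hc.mono (fun x hx => by simp at hx ⊢; exact Or.inr hx)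
      have IH := ih hcs hs
      have hau : c a - u ≠ 0 := sub_ne_zero.mpr (hu a (mem_cons_self a s))
      have hai : ∀ i ∈ s, c a - c i ≠ 0 := by
        intro i hi
        refine sub_ne_zero.mpr fun h => ha ?_
        have := hc (by simp) (by simp [hi]) h
        rwa [this]
      have IHa := IH (c a) (fun i hi h => hai i hi (by rw [h, sub_self]))
      have IHu := IH u (fun i hi => hu i (mem_cons_of_mem hi))
      rw [prod_cons, sum_cons, erase_cons, mul_inv, IHu, IHa]
      rw [Finset.sum_mul, Finset.mul_sum, ← Finset.sum_add_distrib]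
      refine Finset.sum_congr rfl fun i hi => ?_
      have h1 : c i - u ≠ 0 := sub_ne_zero.mpr (hu i (mem_cons_of_mem hi))
      have h2 : c a - c i ≠ 0 := hai i hi
      have heq : (cons a s ha).erase i = cons a (s.erase i) (by simp [ha]) := by
        rw [cons_eq_insert, cons_eq_insert, erase_insert_of_ne (by rintro rfl; exact ha hi)]
      rw [heq, prod_cons, mul_inv]
      have h2' : c i - c a ≠ 0 := fun h => h2 (by rw [← neg_sub, h, neg_zero])
      by_cases hP : (∏ j ∈ s.erase i, (c j - c i)) = 0
      · simp [hP]
      · generalize hPdef : (∏ j ∈ s.erase i, (c j - c i)) = P at hP ⊢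
        field_simp
        ring
    · obtain rfl : s = ∅ := Finset.not_nonempty_iff_eq_empty.mp hs
      simp

lemma hasDerivAt_pow_neg_inv (c : ℝ) (m : ℕ) (u : ℝ) (hu : u < 0) :
    HasDerivAt (fun v => c / (((m:ℝ)+1) * (-v)^(m+1))) (c * ((-u)^(m+2))⁻¹) u := by
  have hne : -u ≠ 0 := neg_ne_zero.mpr hu.ne
  have hm1 : ((m:ℝ)+1) ≠ 0 := by positivity
  have h1 : HasDerivAt (fun v : ℝ => -v) (-1) u := (hasDerivAt_id u).neg
  have h2 : HasDerivAt (fun v : ℝ => (-v)^(m+1))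
      (((m:ℝ)+1) * (-u)^m * (-1)) u := by
    have := (hasDerivAt_pow (m+1) (-u)).comp u h1
    simpa [Function.comp_def] using this
  have h3 := (h2.const_mul ((m:ℝ)+1)).inv (by positivity)
  have h4 := h3.const_mul c
  simp only [div_eq_mul_inv]
  refine h4.congr_deriv ?_
  rw [div_eq_mul_inv]
  field_simp
  ring


set_option maxHeartbeats 1000000 in
theorem blow_up_forward (n : ℕ) (hn : 1 ≤ n) (hodd : Odd n)
    (k : Fin n → ℝ) (hk : ∀ i, 0 < k i) (hinj : Function.Injective k)
    (f : ℝ → ℝ) (hf : ∀ u, f u = (-1 : ℝ) ^ (n + 1) * u * ∏ i, (1 - u / k i))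
    (y₀ : ℝ) (hy₀ : y₀ < 0) (T : ℝ) (hT : 0 < T)
    (y : ℝ → ℝ) (hy0 : y 0 = y₀)
    (hy : ∀ t ∈ Set.Ico 0 T, HasDerivWithinAt y (f (y t)) (Set.Ico 0 T) t) :
    T ≤ ∑ i, ((∏ j ∈ Finset.univ.erase i, k j) / (∏ j ∈ Finset.univ.erase i, (k j - k i))) *
          Real.log (1 + k i / (-y₀)) ∧
    ∑ i, ((∏ j ∈ Finset.univ.erase i, k j) / (∏ j ∈ Finset.univ.erase i, (k j - k i))) *
          Real.log (1 + k i / (-y₀)) <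
      (∏ i, k i) / (n * (-y₀) ^ n) := by

  haveI : Nonempty (Fin n) := ⟨⟨0, hn⟩⟩
  have hneg1 : ((-1 : ℝ)) ^ (n + 1) = 1 := (hodd.add_one).neg_one_pow
  have hknz : ∀ i, k i ≠ 0 := fun i => (hk i).ne'
  have hprodk : (0:ℝ) < ∏ i, k i := Finset.prod_pos fun i _ => hk i
  have hPe : ∀ i : Fin n, (∏ j ∈ univ.erase i, (k j - k i)) ≠ 0 := by
    intro i
    refine Finset.prod_ne_zero_iff.mpr fun j hj => sub_ne_zero.mpr ?_
    exact fun h => (Finset.mem_erase.mp hj).1 (hinj h)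
  have hPke : ∀ i : Fin n, (0:ℝ) < ∏ j ∈ univ.erase i, k j :=
    fun i => Finset.prod_pos fun j _ => hk j
  set A : Fin n → ℝ :=
    fun i => (∏ j ∈ univ.erase i, k j) / (∏ j ∈ univ.erase i, (k j - k i)) with hA
  have hpf := partial_fractions k univ hinj.injOn univ_nonempty
  -- f is negative on negatives
  have hfval : ∀ u : ℝ, u < 0 →
      f u = u * ((∏ i, (k i - u)) * (∏ i, k i)⁻¹) := by
    intro u hu
    rw [hf, hneg1, one_mul, ← Finset.prod_inv_distrib, ← Finset.prod_mul_distrib]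
    congr 1
    refine Finset.prod_congr rfl fun i _ => ?_
    rw [mul_comm, inv_mul_eq_div, eq_div_iff (hknz i), sub_mul, one_mul,
      div_mul_cancel₀ _ (hknz i)]
  have hprodku : ∀ u : ℝ, u < 0 → (0:ℝ) < ∏ i, (k i - u) :=
    fun u hu => Finset.prod_pos fun i _ => by have := hk i; linarith
  have hfneg : ∀ u : ℝ, u < 0 → f u < 0 := by
    intro u hu
    rw [hfval u hu]
    exact mul_neg_of_neg_of_pos hu (mul_pos (hprodku u hu) (inv_pos.mpr hprodk))
  -- sum of A equals 1
  have hsumA : ∑ i, A i = 1 := by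
    have h0 := hpf 0 (fun i _ => hknz i)
    simp only [sub_zero] at h0
    have : ∑ i, A i = (∏ i, k i) * ∑ i, (∏ j ∈ univ.erase i, (k j - k i))⁻¹ * (k i)⁻¹ := by
      rw [Finset.mul_sum]
      refine Finset.sum_congr rfl fun i _ => ?_
      rw [hA]
      rw [← Finset.mul_prod_erase univ k (mem_univ i)]
      field_simp [hknz i, hPe i]
    rw [this, ← h0, mul_inv_cancel₀ hprodk.ne']
  -- the key partial fraction identity
  have hstar : ∀ u : ℝ, u < 0 →
      ∑ i, A i * ((-u)⁻¹ - (k i - u)⁻¹) = (∏ i, k i) * ((-u) * ∏ i, (k i - u))⁻¹ := by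
    intro u hu
    have hku : ∀ i : Fin n, k i - u ≠ 0 := fun i => ne_of_gt (by have := hk i; linarith)
    have hpu := hpf u (fun i _ => by have := hk i; intro h; rw [← h] at hu; linarith)
    rw [mul_inv, ← mul_assoc, mul_comm ((∏ i, k i)) ((-u)⁻¹), mul_assoc, hpu,
      Finset.mul_sum, Finset.mul_sum]
    refine Finset.sum_congr rfl fun i _ => ?_
    rw [hA, ← Finset.mul_prod_erase univ k (mem_univ i)]
    have hunz : -u ≠ 0 := neg_ne_zero.mpr hu.ne
    field_simp [hku i, hPe i, hknz i, hunz, hu.ne]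
    ring
  set G : ℝ → ℝ := fun u => ∑ i, A i * (Real.log (k i - u) - Real.log (-u)) with hG
  have hG' : ∀ u : ℝ, u < 0 →
      HasDerivAt G ((∏ i, k i) * ((-u) * ∏ i, (k i - u))⁻¹) u := by
    intro u hu
    have hunz : -u ≠ 0 := neg_ne_zero.mpr hu.ne
    have hku : ∀ i : Fin n, k i - u ≠ 0 := fun i => ne_of_gt (by have := hk i; linarith)
    have hterm : ∀ i : Fin n, HasDerivAt
        (fun v => A i * (Real.log (k i - v) - Real.log (-v)))
        (A i * ((-u)⁻¹ - (k i - u)⁻¹)) u := by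
      intro i
      have d1 : HasDerivAt (fun v : ℝ => Real.log (k i - v)) ((k i - u)⁻¹ * (-1)) u := by
        have hin : HasDerivAt (fun v : ℝ => k i - v) (-1) u := (hasDerivAt_id u).const_sub (k i)
        exact (Real.hasDerivAt_log (hku i)).comp u hin
      have d2 : HasDerivAt (fun v : ℝ => Real.log (-v)) ((-u)⁻¹ * (-1)) u := by
        have hin : HasDerivAt (fun v : ℝ => -v) (-1) u := (hasDerivAt_id u).neg
        exact (Real.hasDerivAt_log hunz).comp u hin
      have := ((d1.sub d2).const_mul (A i))
      refine this.congr_deriv ?_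
      ring
    have hsum : HasDerivAt (fun v => ∑ i, A i * (Real.log (k i - v) - Real.log (-v)))
        (∑ i, A i * ((-u)⁻¹ - (k i - u)⁻¹)) u := HasDerivAt.fun_sum (fun i _ => hterm i)
    rw [hG]
    convert hsum using 1
    rw [hstar u hu]
  have hGcont : ∀ u : ℝ, u < 0 → ContinuousAt G u :=
    fun u hu => (hG' u hu).differentiableAt.continuousAt
  have hGmono : StrictMonoOn G (Set.Iio 0) := by
    refine strictMonoOn_of_deriv_pos (convex_Iio 0)
      (fun u hu => (hGcont u hu).continuousWithinAt) (fun u hu => ?_)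
    rw [interior_Iio] at hu
    rw [(hG' u hu).deriv]
    have h1 : (0:ℝ) < -u := by linarith [Set.mem_Iio.mp hu]
    have h2 := hprodku u hu
    positivity
  have hGlim : Tendsto G atBot (𝓝 0) := by
    have hterm : ∀ i : Fin n, Tendsto (fun u => A i * Real.log ((k i - u) / (-u)))
        atBot (𝓝 0) := by
      intro i
      have h1 : Tendsto (fun u : ℝ => (k i - u) / (-u)) atBot (𝓝 1) := by
        have : ∀ u : ℝ, u < 0 → (k i - u) / (-u) = k i / (-u) + 1 := by
          intro u hu
          have h0 : -u ≠ 0 := neg_ne_zero.mpr hu.ne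
          have h0' : u ≠ 0 := hu.ne
          field_simp
          ring
        have h2 : Tendsto (fun u : ℝ => k i / (-u) + 1) atBot (𝓝 (0 + 1)) :=
          (Tendsto.div_atTop tendsto_const_nhds
            (tendsto_neg_atBot_atTop)).add tendsto_const_nhds
        rw [zero_add] at h2
        refine h2.congr' ?_
        filter_upwards [eventually_lt_atBot (0:ℝ)] with u hu
        exact (this u hu).symm
      have h2 : Tendsto (fun u : ℝ => Real.log ((k i - u) / (-u))) atBot (𝓝 0) := by
        have := (Real.continuousAt_log (one_ne_zero)).tendsto.comp h1
        simpa [Function.comp_def] using this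
      simpa using h2.const_mul (A i)
    have := tendsto_finset_sum univ (fun i _ => hterm i)
    rw [Finset.sum_const_zero] at this
    refine this.congr' ?_
    filter_upwards [eventually_lt_atBot (0:ℝ)] with u hu
    refine Finset.sum_congr rfl fun i _ => ?_
    have h1 : k i - u ≠ 0 := ne_of_gt (by have := hk i; linarith)
    have h2 : -u ≠ 0 := neg_ne_zero.mpr hu.ne
    rw [Real.log_div h1 h2]
  have hGpos : ∀ u : ℝ, u < 0 → 0 < G u := by
    intro u hu
    have h1 : G (u - 1) < G u :=
      hGmono (Set.mem_Iio.mpr (by linarith)) (Set.mem_Iio.mpr hu) (by linarith)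
    have h2 : 0 ≤ G (u - 1) := by
      refine le_of_tendsto hGlim ?_
      filter_upwards [eventually_le_atBot (u - 1)] with v hv
      rcases eq_or_lt_of_le hv with h | h
      · exact le_of_eq (congrArg G h)
      · exact (hGmono (Set.mem_Iio.mpr (by linarith)) (Set.mem_Iio.mpr (by linarith)) h).le
    linarith
  -- y is continuous on [0,T)
  have hycont : ContinuousOn y (Set.Ico 0 T) := fun t ht => (hy t ht).continuousWithinAt
  -- y stays negative
  have hyneg : ∀ t ∈ Set.Ico 0 T, y t < 0 := by
    intro t₀ ht₀
    by_contra hcon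
    push_neg at hcon
    set S : Set ℝ := Set.Icc 0 t₀ ∩ y ⁻¹' Set.Ici 0 with hS
    have hsubT : Set.Icc 0 t₀ ⊆ Set.Ico 0 T := fun z hz =>
      ⟨hz.1, lt_of_le_of_lt hz.2 ht₀.2⟩
    have hSclosed : IsClosed S :=
      (hycont.mono hsubT).preimage_isClosed_of_isClosed isClosed_Icc isClosed_Ici
    have hSne : S.Nonempty := ⟨t₀, ⟨⟨ht₀.1, le_refl t₀⟩, hcon⟩⟩
    have hSbdd : BddBelow S := ⟨0, fun z hz => hz.1.1⟩
    set s := sInf S with hs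
    have hsmem : s ∈ S := hSclosed.csInf_mem hSne hSbdd
    have hys : 0 ≤ y s := hsmem.2
    have hs0 : 0 < s := by
      rcases eq_or_lt_of_le (hsmem.1.1 : (0:ℝ) ≤ s) with h | h
      · exfalso; rw [← h, hy0] at hys; linarith
      · exact h
    have hbefore : ∀ z, 0 ≤ z → z < s → y z < 0 := by
      intro z hz0 hzs
      by_contra h
      push_neg at h
      have hzS : z ∈ S := ⟨⟨hz0, le_trans hzs.le hsmem.1.2⟩, h⟩
      exact absurd (csInf_le hSbdd hzS) (not_le.mpr hzs)
    have hsubT2 : Set.Icc 0 s ⊆ Set.Ico 0 T := fun z hz =>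
      hsubT ⟨hz.1, le_trans hz.2 hsmem.1.2⟩
    have hanti : StrictAntiOn y (Set.Icc 0 s) := by
      refine strictAntiOn_of_deriv_neg (convex_Icc 0 s) (hycont.mono hsubT2) ?_
      intro z hz
      rw [interior_Icc] at hz
      have hzT : z ∈ Set.Ico 0 T := hsubT2 ⟨hz.1.le, hz.2.le⟩
      have hzd : HasDerivAt y (f (y z)) z :=
        (hy z hzT).hasDerivAt (Ico_mem_nhds hz.1 hzT.2)
      rw [hzd.deriv]
      exact hfneg (y z) (hbefore z hz.1.le hz.2)
    have hlt : y s < y 0 :=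
      hanti ⟨le_refl 0, hs0.le⟩ ⟨hs0.le, le_refl s⟩ hs0
    rw [hy0] at hlt
    linarith
  -- the key identity : G (y t) + t = G y₀
  have hkey : ∀ t ∈ Set.Ico 0 T, G (y t) + t = G y₀ := by
    intro t ht
    set φ : ℝ → ℝ := fun z => G (y z) + z with hφ
    have hsub : Set.Icc 0 t ⊆ Set.Ico 0 T := fun z hz => ⟨hz.1, lt_of_le_of_lt hz.2 ht.2⟩
    have hφcont : ContinuousOn φ (Set.Icc 0 t) := by
      refine ContinuousOn.add ?_ continuousOn_id
      intro z hz
      exact (hGcont (y z) (hyneg z (hsub hz))).comp_continuousWithinAt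
        ((hycont z (hsub hz)).mono hsub)
    have hφderiv : ∀ x ∈ Set.Ico 0 t, HasDerivWithinAt φ 0 (Set.Ici x) x := by
      intro x hx
      have hxT : x ∈ Set.Ico 0 T := ⟨hx.1, lt_trans hx.2 ht.2⟩
      have hyx : y x < 0 := hyneg x hxT
      have hchain : HasDerivWithinAt (fun z => G (y z))
          ((∏ i, k i) * ((-(y x)) * ∏ i, (k i - y x))⁻¹ * f (y x)) (Set.Ico 0 T) x :=
        (hG' (y x) hyx).comp_hasDerivWithinAt x (hy x hxT)
      have hφd : HasDerivWithinAt φ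
          ((∏ i, k i) * ((-(y x)) * ∏ i, (k i - y x))⁻¹ * f (y x) + 1) (Set.Ico 0 T) x :=
        hchain.add (hasDerivWithinAt_id x _)
      have hval : (∏ i, k i) * ((-(y x)) * ∏ i, (k i - y x))⁻¹ * f (y x) + 1 = 0 := by
        rw [hfval _ hyx]
        have h1 : -(y x) ≠ 0 := neg_ne_zero.mpr hyx.ne
        have h2 : (∏ i, (k i - y x)) ≠ 0 := (hprodku _ hyx).ne'
        have h3 : (∏ i, k i) ≠ 0 := hprodk.ne'
        have h4 : y x ≠ 0 := hyx.ne
        field_simp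
        ring
      rw [hval] at hφd
      refine hφd.mono_of_mem_nhdsWithin ?_
      rw [mem_nhdsWithin]
      exact ⟨Set.Iio T, isOpen_Iio, hxT.2, fun z hz => ⟨le_trans hxT.1 hz.2, hz.1⟩⟩
    have hconst := constant_of_has_deriv_right_zero hφcont hφderiv t ⟨ht.1, le_refl t⟩
    have : φ 0 = G y₀ := by rw [hφ]; simp [hy0]
    rw [this] at hconst
    exact hconst
  have hTle : T ≤ G y₀ := by
    by_contra h
    push_neg at h
    have hGy₀pos : 0 < G y₀ := hGpos y₀ hy₀
    have hmem : G y₀ ∈ Set.Ico 0 T := ⟨hGy₀pos.le, h⟩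
    have h1 := hkey _ hmem
    have h2 := hGpos (y (G y₀)) (hyneg _ hmem)
    linarith
  -- PART 2
  set Bf : ℝ → ℝ := fun u => (∏ i, k i) / ((n:ℝ) * (-u)^n) with hBf
  have hB' : ∀ u : ℝ, u < 0 → HasDerivAt Bf ((∏ i, k i) * ((-u)^(n+1))⁻¹) u := by
    intro u hu
    have hder := hasDerivAt_pow_neg_inv (∏ i, k i) (n-1) u hu
    have h1 : n - 1 + 1 = n := Nat.succ_pred_eq_of_pos hn
    have h2 : n - 1 + 2 = n + 1 := by omega
    rw [h2] at hder
    rw [h1] at hder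
    have h3 : ((n-1 : ℕ):ℝ) + 1 = (n:ℝ) := by
      exact_mod_cast congrArg (Nat.cast : ℕ → ℝ) h1
    rw [h3] at hder
    exact hder
  have hD' : ∀ u : ℝ, u < 0 → HasDerivAt (fun u => Bf u - G u)
      ((∏ i, k i) * ((-u)^(n+1))⁻¹ - (∏ i, k i) * ((-u) * ∏ i, (k i - u))⁻¹) u :=
    fun u hu => (hB' u hu).sub (hG' u hu)
  have hDderivpos : ∀ u : ℝ, u < 0 →
      0 < (∏ i, k i) * ((-u)^(n+1))⁻¹ - (∏ i, k i) * ((-u) * ∏ i, (k i - u))⁻¹ := by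
    intro u hu
    have hupos : (0:ℝ) < -u := by linarith
    have hlt : (-u)^n < ∏ i, (k i - u) := by
      have := Finset.prod_lt_prod_of_nonempty (s := univ) (f := fun _ : Fin n => -u)
        (g := fun i => k i - u) (fun i _ => hupos)
        (fun i _ => by show -u < k i - u; have := hk i; linarith) univ_nonempty
      simpa [Finset.prod_const, Finset.card_univ] using this
    have hlt2 : (-u)^(n+1) < (-u) * ∏ i, (k i - u) := by
      rw [pow_succ, mul_comm]
      exact mul_lt_mul_of_pos_left hlt hupos
    have hinv : ((-u) * ∏ i, (k i - u))⁻¹ < ((-u)^(n+1))⁻¹ :=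
      inv_strictAnti₀ (by positivity) hlt2
    have := mul_lt_mul_of_pos_left hinv hprodk
    linarith
  have hDmono : StrictMonoOn (fun u => Bf u - G u) (Set.Iio 0) := by
    refine strictMonoOn_of_deriv_pos (convex_Iio 0)
      (fun u hu => ((hD' u hu).differentiableAt.continuousAt).continuousWithinAt)
      (fun u hu => ?_)
    rw [interior_Iio] at hu
    rw [(hD' u hu).deriv]
    exact hDderivpos u hu
  have hBlim : Tendsto Bf atBot (𝓝 0) := by
    rw [hBf]
    refine Tendsto.div_atTop tendsto_const_nhds ?_
    have h1 : Tendsto (fun v : ℝ => v^n) atTop atTop :=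
      tendsto_pow_atTop (by omega : n ≠ 0)
    have h2 : Tendsto (fun u : ℝ => (-u)^n) atBot atTop :=
      h1.comp tendsto_neg_atBot_atTop
    exact h2.const_mul_atTop (by positivity : (0:ℝ) < (n:ℝ))
  have hDlim : Tendsto (fun u => Bf u - G u) atBot (𝓝 0) := by
    have := hBlim.sub hGlim
    simpa using this
  have hDpos : 0 < Bf y₀ - G y₀ := by
    have h1 : Bf (y₀ - 1) - G (y₀ - 1) < Bf y₀ - G y₀ :=
      hDmono (Set.mem_Iio.mpr (by linarith)) (Set.mem_Iio.mpr hy₀) (by linarith)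
    have h2 : 0 ≤ Bf (y₀ - 1) - G (y₀ - 1) := by
      refine le_of_tendsto hDlim ?_
      filter_upwards [eventually_le_atBot (y₀ - 1)] with v hv
      rcases eq_or_lt_of_le hv with h | h
      · exact le_of_eq (by rw [h])
      · exact (hDmono (Set.mem_Iio.mpr (by linarith)) (Set.mem_Iio.mpr (by linarith)) h).le
    linarith
  -- assemble
  have hGy₀eq : ∑ i, A i * Real.log (1 + k i / (-y₀)) = G y₀ := by
    rw [hG]
    refine Finset.sum_congr rfl fun i _ => ?_
    have h0 : -y₀ ≠ 0 := neg_ne_zero.mpr hy₀.ne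
    have h4 : y₀ ≠ 0 := hy₀.ne
    have h1 : (1 : ℝ) + k i / (-y₀) = (k i - y₀)/(-y₀) := by
      field_simp
      ring
    have h2 : k i - y₀ ≠ 0 := ne_of_gt (by have := hk i; linarith)
    rw [h1, Real.log_div h2 h0]
  constructor
  · rw [show (∑ i, ((∏ j ∈ Finset.univ.erase i, k j) /
        (∏ j ∈ Finset.univ.erase i, (k j - k i))) * Real.log (1 + k i / (-y₀)))
      = ∑ i, A i * Real.log (1 + k i / (-y₀)) from rfl, hGy₀eq]
    exact hTle
  · rw [show (∑ i, ((∏ j ∈ Finset.univ.erase i, k j) /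
        (∏ j ∈ Finset.univ.erase i, (k j - k i))) * Real.log (1 + k i / (-y₀)))
      = ∑ i, A i * Real.log (1 + k i / (-y₀)) from rfl, hGy₀eq]
    have : Bf y₀ = (∏ i, k i) / (n * (-y₀) ^ n) := rfl
    linarith
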